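/- arXiv:1710.09606 — 2 statements merged into one kernel-verified Lean document; each statement's English description precedes it below -/
import Mathlib

section
/- For every finitely generated P-closed set Ω ⊆ 𝔽ⁿ, the pair (𝒫(Ω), ℐ_Ω) is a matroid, where 𝒫(Ω) is the collection of all subsets of Ω and ℐ_Ω is the collection of all P-independent subsets of Ω; moreover, the bases of this matroid (its maximal independent sets) are exactly the P-bases of Ω. -/
/- Common setup: free multivariate skew polynomial rings over a division ring. -/

open Matrix Finsupp

/-- The underlying left `𝔽`-module of the free multivariate skew polynomial ring:
the free left `𝔽`-module with basis the free monoid on `n` symbols. -/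
abbrev SkewPoly (𝔽 : Type*) [DivisionRing 𝔽] (n : ℕ) : Type _ := FreeMonoid (Fin n) →₀ 𝔽

namespace SkewPoly

variable {𝔽 : Type*} [DivisionRing 𝔽] {n : ℕ}

/-- The variable `xᵢ` as a skew polynomial. -/
noncomputable def X (𝔽 : Type*) [DivisionRing 𝔽] {n : ℕ} (i : Fin n) : SkewPoly 𝔽 n :=
  Finsupp.single (FreeMonoid.of i) 1

/-- The constant `a` as a skew polynomial (coefficient on the empty word). -/
noncomputable def C {𝔽 : Type*} [DivisionRing 𝔽] (n : ℕ) (a : 𝔽) :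
    SkewPoly 𝔽 n := Finsupp.single 1 a

/-- The degree of a skew polynomial: the maximal length of a word in its support
(`⊥` for the zero polynomial). -/
noncomputable def deg (F : SkewPoly 𝔽 n) : WithBot ℕ :=
  F.support.sup fun m => ((FreeMonoid.length m : ℕ) : WithBot ℕ)

/-- A matrix morphism `σ : 𝔽 → Mₙ(𝔽)`: a unital ring homomorphism. -/
def IsMatrixMorphism (σ : 𝔽 → Matrix (Fin n) (Fin n) 𝔽) : Prop :=
  σ 1 = 1 ∧ (∀ a b : 𝔽, σ (a + b) = σ a + σ b) ∧ (∀ a b : 𝔽, σ (a * b) = σ a * σ b)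

/-- A `σ`-vector derivation `δ : 𝔽 → 𝔽ⁿ`: additive with `δ(ab) = σ(a)δ(b) + δ(a)b`. -/
def IsVectorDerivation (σ : 𝔽 → Matrix (Fin n) (Fin n) 𝔽) (δ : 𝔽 → Fin n → 𝔽) : Prop :=
  (∀ a b : 𝔽, δ (a + b) = δ a + δ b) ∧
    (∀ a b : 𝔽, δ (a * b) = σ a *ᵥ δ b + fun i => δ a i * b)

/-- A multiplication on the free module `SkewPoly 𝔽 n` making it a ring (with the
existing addition) whose identity is the empty word, which restricts to concatenation
on monomials, is additive on degrees of nonzero elements, and for which left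
multiplication by constants is scalar multiplication. -/
structure RawMul (𝔽 : Type*) [DivisionRing 𝔽] (n : ℕ) where
  /-- the multiplication -/
  mul : SkewPoly 𝔽 n → SkewPoly 𝔽 n → SkewPoly 𝔽 n
  mul_add : ∀ F G H : SkewPoly 𝔽 n, mul F (G + H) = mul F G + mul F H
  add_mul : ∀ F G H : SkewPoly 𝔽 n, mul (F + G) H = mul F H + mul G H
  mul_assoc : ∀ F G H : SkewPoly 𝔽 n, mul (mul F G) H = mul F (mul G H)
  one_mul : ∀ F : SkewPoly 𝔽 n, mul (C n 1) F = F
  mul_one : ∀ F : SkewPoly 𝔽 n, mul F (C n 1) = F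
  mono_mul_mono : ∀ m m' : FreeMonoid (Fin n),
    mul (Finsupp.single m 1) (Finsupp.single m' 1) = Finsupp.single (m * m') 1
  const_mul : ∀ (a : 𝔽) (F : SkewPoly 𝔽 n), mul (C n a) F = a • F
  deg_mul : ∀ F G : SkewPoly 𝔽 n, F ≠ 0 → G ≠ 0 → deg (mul F G) = deg F + deg G

/-- The multiplication `S` satisfies the commutation rule
`xᵢ a = Σⱼ σ_{i,j}(a) xⱼ + δᵢ(a)`. -/
def HasCommRule (S : RawMul 𝔽 n) (σ : 𝔽 → Matrix (Fin n) (Fin n) 𝔽)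
    (δ : 𝔽 → Fin n → 𝔽) : Prop :=
  ∀ (i : Fin n) (a : 𝔽),
    S.mul (X 𝔽 i) (C n a) =
      (∑ j : Fin n, Finsupp.single (FreeMonoid.of j) (σ a i j)) + C n (δ a i)

/-- `F = Σᵢ Gᵢ (xᵢ - aᵢ) + b`, i.e. `b` is a remainder of `F` upon right division
by `x₁ - a₁, …, xₙ - aₙ`; equivalently `F - b` lies in the left ideal generated by
the `xᵢ - aᵢ`. -/
def Decomposes (S : RawMul 𝔽 n) (a : Fin n → 𝔽) (F : SkewPoly 𝔽 n) (b : 𝔽) : Prop :=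
  ∃ G : Fin n → SkewPoly 𝔽 n,
    F = (∑ i : Fin n, S.mul (G i) (X 𝔽 i - C n (a i))) + C n b

/-- The evaluation of `F` at the point `a`: the unique `b ∈ 𝔽` such that `F - b`
lies in the left ideal generated by `x₁ - a₁, …, xₙ - aₙ`. -/
noncomputable def eval (S : RawMul 𝔽 n) (a : Fin n → 𝔽) (F : SkewPoly 𝔽 n) : 𝔽 :=
  letI := Classical.propDecidable (∃ b : 𝔽, Decomposes S a F b)
  if h : ∃ b : 𝔽, Decomposes S a F b then h.choose else 0

/-- The `(σ,δ)`-conjugate `a^c = σ(c) a c⁻¹ + δ(c) c⁻¹` of `a` with respect to `c`. -/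
noncomputable def conj (σ : 𝔽 → Matrix (Fin n) (Fin n) 𝔽) (δ : 𝔽 → Fin n → 𝔽)
    (a : Fin n → 𝔽) (c : 𝔽) : Fin n → 𝔽 :=
  fun i => (σ c *ᵥ a) i * c⁻¹ + δ c i * c⁻¹

/-- `I(Ω)`: the set of skew polynomials vanishing at every point of `Ω`. -/
def zeroIdeal (S : RawMul 𝔽 n) (Ω : Set (Fin n → 𝔽)) : Set (SkewPoly 𝔽 n) :=
  {F | ∀ a ∈ Ω, eval S a F = 0}

/-- The left ideal of `SkewPoly 𝔽 n` generated by `x₁ - a₁, …, xₙ - aₙ`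
(the set of sums of left multiples of the generators). -/
def pointIdeal (S : RawMul 𝔽 n) (a : Fin n → 𝔽) : Set (SkewPoly 𝔽 n) :=
  {F | ∃ G : Fin n → SkewPoly 𝔽 n, F = ∑ i : Fin n, S.mul (G i) (X 𝔽 i - C n (a i))}

/-- The P-closure `Ω̄ = Z(I(Ω))` of a set of points `Ω`. -/
def pClosure (S : RawMul 𝔽 n) (Ω : Set (Fin n → 𝔽)) : Set (Fin n → 𝔽) :=
  {a | ∀ F ∈ zeroIdeal S Ω, eval S a F = 0}

/-- `Ω` is P-closed if it equals its P-closure. -/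
def IsPClosed (S : RawMul 𝔽 n) (Ω : Set (Fin n → 𝔽)) : Prop := pClosure S Ω = Ω

/-- `B` is P-independent: no point of `B` lies in the P-closure of the rest. -/
def PIndep (S : RawMul 𝔽 n) (B : Set (Fin n → 𝔽)) : Prop :=
  ∀ a ∈ B, a ∉ pClosure S (B \ {a})

/-- `B` is a P-basis of `Ω`: a P-independent subset of `Ω` whose P-closure is `Ω`. -/
def IsPBasis (S : RawMul 𝔽 n) (B Ω : Set (Fin n → 𝔽)) : Prop :=
  B ⊆ Ω ∧ PIndep S B ∧ pClosure S B = Ω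

/-- `Ω` is finitely generated: it is the P-closure of a finite subset of itself. -/
def FinGen (S : RawMul 𝔽 n) (Ω : Set (Fin n → 𝔽)) : Prop :=
  ∃ G : Set (Fin n → 𝔽), G.Finite ∧ G ⊆ Ω ∧ pClosure S G = Ω

/-- The rank of a P-closed set: the (common) cardinality of its P-bases. -/
noncomputable def pRank (S : RawMul 𝔽 n) (Ω : Set (Fin n → 𝔽)) : ℕ :=
  sInf {k : ℕ | ∃ B : Finset (Fin n → 𝔽), IsPBasis S ↑B Ω ∧ B.card = k}

/-- The image of the evaluation map `E_Ω : R → 𝔽^Ω`, as a left `𝔽`-subspace of `𝔽^Ω`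
(the span of the image; the image is itself a subspace since evaluation is left linear). -/
noncomputable def evalSpan (S : RawMul 𝔽 n) (Ω : Set (Fin n → 𝔽)) :
    Submodule 𝔽 (↥Ω → 𝔽) :=
  Submodule.span 𝔽 (Set.range fun F : SkewPoly 𝔽 n => fun a : ↥Ω => eval S ↑a F)

/-- `I` is a two-sided ideal with respect to the multiplication `S`. -/
def IsTwoSidedIdealSet (S : RawMul 𝔽 n) (I : Set (SkewPoly 𝔽 n)) : Prop :=
  (0 : SkewPoly 𝔽 n) ∈ I ∧ (∀ F ∈ I, ∀ G ∈ I, F + G ∈ I) ∧ (∀ F ∈ I, -F ∈ I) ∧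
    (∀ F ∈ I, ∀ G : SkewPoly 𝔽 n, S.mul G F ∈ I) ∧
    (∀ F ∈ I, ∀ G : SkewPoly 𝔽 n, S.mul F G ∈ I)


/-- The left row-rank of the skew Vandermonde matrix `V_d(G)`: the dimension of the
left `𝔽`-span of its rows `(N_m(c))_{c ∈ G}`, indexed by the words `m` of length `< d`,
where `N_m(c)` is the evaluation of the monomial `m` at the point `c`. -/
noncomputable def vandermondeRank (S : RawMul 𝔽 n) (G : Finset (Fin n → 𝔽)) (d : ℕ) :
    Cardinal :=
  Module.rank 𝔽 ↥(Submodule.span 𝔽 (Set.range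
    fun m : {m : FreeMonoid (Fin n) // FreeMonoid.length m < d} =>
      fun c : ↥G => eval S ↑c (Finsupp.single (m : FreeMonoid (Fin n)) (1 : 𝔽))))

end SkewPoly

open SkewPoly
section Stmt9Aux

open SkewPoly FreeMonoid

variable {𝔽 : Type*} [DivisionRing 𝔽] {n : ℕ} (S : RawMul 𝔽 n)

/-! ### Ring-like consequences of the `RawMul` axioms -/

theorem rm_mul_zero (F : SkewPoly 𝔽 n) : S.mul F 0 = 0 := by
  have h := S.mul_add F 0 0
  rw [add_zero] at h
  exact (left_eq_add.mp h)

theorem rm_zero_mul (F : SkewPoly 𝔽 n) : S.mul 0 F = 0 := by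
  have h := S.add_mul 0 0 F
  rw [add_zero] at h
  exact (left_eq_add.mp h)

theorem rm_mul_neg (F G : SkewPoly 𝔽 n) : S.mul F (-G) = -(S.mul F G) := by
  have h := S.mul_add F G (-G)
  rw [add_neg_cancel, rm_mul_zero] at h
  exact (neg_eq_of_add_eq_zero_right h.symm).symm

theorem rm_neg_mul (F G : SkewPoly 𝔽 n) : S.mul (-F) G = -(S.mul F G) := by
  have h := S.add_mul F (-F) G
  rw [add_neg_cancel, rm_zero_mul] at h
  exact (neg_eq_of_add_eq_zero_right h.symm).symm

theorem rm_sub_mul (F F' G : SkewPoly 𝔽 n) :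
    S.mul (F - F') G = S.mul F G - S.mul F' G := by
  rw [sub_eq_add_neg, S.add_mul, rm_neg_mul, sub_eq_add_neg]

theorem rm_mul_sum {ι : Type*} (s : Finset ι) (F : SkewPoly 𝔽 n) (g : ι → SkewPoly 𝔽 n) :
    S.mul F (∑ i ∈ s, g i) = ∑ i ∈ s, S.mul F (g i) := by
  classical
  induction s using Finset.induction with
  | empty => simp [rm_mul_zero]
  | @insert a s' h ih =>
                   rw [Finset.sum_insert h, Finset.sum_insert h, S.mul_add, ih]

theorem rm_smul_mul (c : 𝔽) (F G : SkewPoly 𝔽 n) :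
    S.mul (c • F) G = c • S.mul F G := by
  rw [← S.const_mul c F, S.mul_assoc, S.const_mul]

theorem rm_C_mul_C (a b : 𝔽) : S.mul (C n a) (C n b) = C n (a * b) := by
  rw [S.const_mul]
  exact Finsupp.smul_single' a 1 b

theorem rm_single_mul_X (m : FreeMonoid (Fin n)) (c : 𝔽) (i : Fin n) :
    S.mul (Finsupp.single m c) (X 𝔽 i) = Finsupp.single (m * FreeMonoid.of i) c := by
  have h1 : (Finsupp.single m c : SkewPoly 𝔽 n) = c • Finsupp.single m 1 := by
    rw [Finsupp.smul_single' c m 1, mul_one]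
  rw [h1, rm_smul_mul, X, S.mono_mul_mono, Finsupp.smul_single' c _ 1, mul_one]

theorem rm_mul_X (F : SkewPoly 𝔽 n) (i : Fin n) :
    S.mul F (X 𝔽 i) = Finsupp.mapDomain (· * FreeMonoid.of i) F := by
  classical
  induction F using Finsupp.induction with
  | zero => rw [rm_zero_mul, Finsupp.mapDomain_zero]
  | single_add m c f hmf hc ih =>
      rw [S.add_mul, Finsupp.mapDomain_add, ih, rm_single_mul_X, Finsupp.mapDomain_single]

/-! ### Words: last-letter decomposition -/

theorem mul_of_inj {m m' : FreeMonoid (Fin n)} {i i' : Fin n}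
    (h : m * FreeMonoid.of i = m' * FreeMonoid.of i') : m = m' ∧ i = i' := by
  have h2 : m.toList ++ [i] = m'.toList ++ [i'] := by
    have := congrArg FreeMonoid.toList h
    simpa [FreeMonoid.toList_mul, FreeMonoid.toList_of] using this
  obtain ⟨h3, h4⟩ := List.append_inj' h2 rfl
  refine ⟨?_, by simpa using h4⟩
  have : FreeMonoid.ofList m.toList = FreeMonoid.ofList m'.toList := congrArg _ h3
  simpa [FreeMonoid.ofList_toList] using this

/-! ### Degrees -/

theorem apply_eq_zero_of_deg_lt {F : SkewPoly 𝔽 n} {w : FreeMonoid (Fin n)}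
    (h : deg F < (w.length : WithBot ℕ)) : F w = 0 := by
  by_contra h0
  have hw : w ∈ F.support := Finsupp.mem_support_iff.2 h0
  have : ((w.length : ℕ) : WithBot ℕ) ≤ deg F := Finset.le_sup (f := fun m => ((FreeMonoid.length m : ℕ) : WithBot ℕ)) hw
  exact absurd h (not_lt.2 this)

theorem deg_C_le (b : 𝔽) : deg (C n b) ≤ 0 := by
  unfold deg C
  refine Finset.sup_le ?_
  intro m hm
  have := Finsupp.support_single_subset hm
  simp only [Finset.mem_singleton] at this
  subst this
  simp

theorem deg_le_of_forall {F : SkewPoly 𝔽 n} {d : ℕ}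
    (h : ∀ m, F m ≠ 0 → FreeMonoid.length m ≤ d) : deg F ≤ (d : WithBot ℕ) := by
  refine Finset.sup_le ?_
  intro m hm
  exact_mod_cast WithBot.coe_le_coe.2 (h m (Finsupp.mem_support_iff.1 hm))

/-! ### Uniqueness of remainders -/

theorem sum_ideal_ne_C {a : Fin n → 𝔽} {G : Fin n → SkewPoly 𝔽 n} {b : 𝔽}
    (h : (∑ i : Fin n, S.mul (G i) (X 𝔽 i - C n (a i))) = C n b) : b = 0 := by
  classical
  by_cases hG : ∀ i, G i = 0
  · have : (∑ i : Fin n, S.mul (G i) (X 𝔽 i - C n (a i))) = 0 := by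
      refine Finset.sum_eq_zero fun i _ => ?_
      rw [hG i, rm_zero_mul]
    rw [this] at h
    have := DFunLike.congr_fun h.symm (1 : FreeMonoid (Fin n))
    simpa [C] using this
  · exfalso
    push_neg at hG
    obtain ⟨i₁, hi₁⟩ := hG
    -- the set of "active" indices
    set P : Finset (Fin n) := Finset.univ.filter (fun i => G i ≠ 0) with hP
    have hi₁P : i₁ ∈ P := by simp [hP, hi₁]
    have hPne : P.Nonempty := ⟨i₁, hi₁P⟩
    set d : ℕ := P.sup (fun i => (G i).support.sup FreeMonoid.length) with hd
    obtain ⟨i₀, hi₀P, hi₀⟩ := Finset.exists_mem_eq_sup P hPne (fun i => (G i).support.sup FreeMonoid.length)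
    have hGi₀ : G i₀ ≠ 0 := by simpa [hP] using hi₀P
    have hsne : (G i₀).support.Nonempty := Finsupp.support_nonempty_iff.2 hGi₀
    obtain ⟨m₀, hm₀s, hm₀⟩ := Finset.exists_mem_eq_sup _ hsne FreeMonoid.length
    have hm₀len : m₀.length = d := by rw [← hm₀, ← hi₀]
    have hGm₀ : G i₀ m₀ ≠ 0 := Finsupp.mem_support_iff.1 hm₀s
    -- bound: every coefficient of G i lives in length ≤ d
    have hbound : ∀ i, ∀ m, G i m ≠ 0 → FreeMonoid.length m ≤ d := by
      intro i m hm
      have hiP : i ∈ P := by simp [hP]; exact fun hc => hm (by rw [hc]; rfl)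
      calc FreeMonoid.length m ≤ (G i).support.sup FreeMonoid.length :=
            Finset.le_sup (Finsupp.mem_support_iff.2 hm)
        _ ≤ d := by rw [hd]; exact Finset.le_sup (f := fun i => (G i).support.sup FreeMonoid.length) hiP
    set w₀ : FreeMonoid (Fin n) := m₀ * FreeMonoid.of i₀ with hw₀
    have hw₀len : w₀.length = d + 1 := by
      simp [hw₀, FreeMonoid.length_mul, hm₀len]
    -- evaluate coefficients at w₀
    have happ := DFunLike.congr_fun h w₀
    -- RHS is zero
    have hrhs : (C n b : SkewPoly 𝔽 n) w₀ = 0 := by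
      rw [C, Finsupp.single_apply_eq_zero]
      intro hww
      exfalso
      have : w₀.length = 0 := by rw [hww]; rfl
      omega
    -- LHS computation
    have hlhs : (∑ i : Fin n, S.mul (G i) (X 𝔽 i - C n (a i))) w₀ = G i₀ m₀ := by
      rw [Finsupp.finset_sum_apply]
      have hterm : ∀ i : Fin n, (S.mul (G i) (X 𝔽 i - C n (a i))) w₀
          = (if i = i₀ then G i₀ m₀ else 0) := by
        intro i
        have hsub : S.mul (G i) (X 𝔽 i - C n (a i))
            = S.mul (G i) (X 𝔽 i) - S.mul (G i) (C n (a i)) := by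
          rw [sub_eq_add_neg, S.mul_add, rm_mul_neg, sub_eq_add_neg]
        rw [hsub, Finsupp.sub_apply]
        have hc : (S.mul (G i) (C n (a i))) w₀ = 0 := by
          by_cases hGi : G i = 0
          · rw [hGi, rm_zero_mul]; rfl
          by_cases ha : a i = 0
          · rw [ha]
            have : (C n (0:𝔽) : SkewPoly 𝔽 n) = 0 := Finsupp.single_zero 1
            rw [this, rm_mul_zero]; rfl
          have hCne : (C n (a i) : SkewPoly 𝔽 n) ≠ 0 := by
            simp [C, Finsupp.single_eq_zero, ha]
          have hdeg : deg (S.mul (G i) (C n (a i))) < ((w₀.length : ℕ) : WithBot ℕ) := by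
            rw [S.deg_mul _ _ hGi hCne, hw₀len]
            have h1 : deg (G i) ≤ ((d : ℕ) : WithBot ℕ) :=
              deg_le_of_forall (fun m hm => hbound i m hm)
            have h2 : deg (C n (a i)) ≤ 0 := deg_C_le _
            calc deg (G i) + deg (C n (a i)) ≤ ((d : ℕ) : WithBot ℕ) + 0 :=
                  add_le_add h1 h2
              _ = ((d : ℕ) : WithBot ℕ) := add_zero _
              _ < (((d+1 : ℕ)) : WithBot ℕ) := by exact_mod_cast Nat.lt_succ_self d
          exact apply_eq_zero_of_deg_lt hdeg
        rw [hc, sub_zero, rm_mul_X]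
        by_cases hii : i = i₀
        · subst hii
          rw [if_pos rfl, hw₀]
          exact Finsupp.mapDomain_apply (fun x y hxy => (mul_of_inj hxy).1) (G i) m₀
        · rw [if_neg hii]
          refine Finsupp.mapDomain_notin_range _ _ ?_
          rintro ⟨m, hm⟩
          exact hii (mul_of_inj hm).2
      rw [Finset.sum_congr rfl (fun i _ => hterm i), Finset.sum_ite_eq' Finset.univ i₀ (fun _ => G i₀ m₀)]
      simp
    rw [hlhs, hrhs] at happ
    exact hGm₀ happ

end Stmt9Aux
section Stmt9Aux2

open SkewPoly FreeMonoid

variable {𝔽 : Type*} [DivisionRing 𝔽] {n : ℕ} (S : RawMul 𝔽 n) {a : Fin n → 𝔽}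

theorem decomp_C (b : 𝔽) : Decomposes S a (C n b) b := by
  refine ⟨0, ?_⟩
  have : ∀ i : Fin n, S.mul ((0 : Fin n → SkewPoly 𝔽 n) i) (X 𝔽 i - C n (a i)) = 0 := by
    intro i; exact rm_zero_mul S _
  rw [Finset.sum_congr rfl (fun i _ => this i)]
  simp

theorem decomp_zero : Decomposes S a 0 0 := by
  have h := decomp_C S (a := a) 0
  have : (C n (0:𝔽) : SkewPoly 𝔽 n) = 0 := Finsupp.single_zero 1
  rwa [this] at h

theorem decomp_add {F F' : SkewPoly 𝔽 n} {b b' : 𝔽}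
    (h : Decomposes S a F b) (h' : Decomposes S a F' b') :
    Decomposes S a (F + F') (b + b') := by
  obtain ⟨G, hG⟩ := h
  obtain ⟨G', hG'⟩ := h'
  refine ⟨G + G', ?_⟩
  rw [hG, hG']
  have : ∀ i : Fin n, S.mul ((G + G') i) (X 𝔽 i - C n (a i))
      = S.mul (G i) (X 𝔽 i - C n (a i)) + S.mul (G' i) (X 𝔽 i - C n (a i)) := by
    intro i
    rw [Pi.add_apply, S.add_mul]
  rw [Finset.sum_congr rfl (fun i _ => this i), Finset.sum_add_distrib]
  rw [show (C n (b + b') : SkewPoly 𝔽 n) = C n b + C n b' from Finsupp.single_add 1 b b']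
  abel

theorem decomp_neg {F : SkewPoly 𝔽 n} {b : 𝔽} (h : Decomposes S a F b) :
    Decomposes S a (-F) (-b) := by
  obtain ⟨G, hG⟩ := h
  refine ⟨-G, ?_⟩
  rw [hG]
  have : ∀ i : Fin n, S.mul ((-G) i) (X 𝔽 i - C n (a i))
      = -(S.mul (G i) (X 𝔽 i - C n (a i))) := by
    intro i; rw [Pi.neg_apply, rm_neg_mul]
  rw [Finset.sum_congr rfl (fun i _ => this i), Finset.sum_neg_distrib]
  rw [show (C n (-b) : SkewPoly 𝔽 n) = -(C n b) from Finsupp.single_neg 1 b]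
  abel

theorem decomp_sub {F F' : SkewPoly 𝔽 n} {b b' : 𝔽}
    (h : Decomposes S a F b) (h' : Decomposes S a F' b') :
    Decomposes S a (F - F') (b - b') := by
  rw [sub_eq_add_neg, sub_eq_add_neg]
  exact decomp_add S h (decomp_neg S h')

theorem decomp_smul {F : SkewPoly 𝔽 n} {b : 𝔽} (c : 𝔽) (h : Decomposes S a F b) :
    Decomposes S a (c • F) (c * b) := by
  obtain ⟨G, hG⟩ := h
  refine ⟨fun i => S.mul (C n c) (G i), ?_⟩
  rw [← S.const_mul c F, hG, S.mul_add, rm_mul_sum]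
  have : ∀ i : Fin n, S.mul (C n c) (S.mul (G i) (X 𝔽 i - C n (a i)))
      = S.mul (S.mul (C n c) (G i)) (X 𝔽 i - C n (a i)) := by
    intro i; rw [S.mul_assoc]
  rw [Finset.sum_congr rfl (fun i _ => this i), rm_C_mul_C]

theorem decomp_sum {ι : Type*} (s : Finset ι) (f : ι → SkewPoly 𝔽 n) (g : ι → 𝔽)
    (h : ∀ i ∈ s, Decomposes S a (f i) (g i)) :
    Decomposes S a (∑ i ∈ s, f i) (∑ i ∈ s, g i) := by
  classical
  induction s using Finset.induction with
  | empty => simpa using decomp_zero S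
  | @insert x s' hmem ih =>
      rw [Finset.sum_insert hmem, Finset.sum_insert hmem]
      exact decomp_add S (h x (Finset.mem_insert_self _ _))
        (ih fun i hi => h i (Finset.mem_insert_of_mem hi))

theorem decomp_ideal (H : Fin n → SkewPoly 𝔽 n) :
    Decomposes S a (∑ i : Fin n, S.mul (H i) (X 𝔽 i - C n (a i))) 0 := by
  refine ⟨H, ?_⟩
  rw [show (C n (0:𝔽) : SkewPoly 𝔽 n) = 0 from Finsupp.single_zero 1, add_zero]

theorem decomp_X (i : Fin n) : Decomposes S a (X 𝔽 i) (a i) := by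
  classical
  refine ⟨(Pi.single i (C n (1:𝔽)) : Fin n → SkewPoly 𝔽 n), ?_⟩
  have h1 : ∀ j : Fin n, S.mul ((Pi.single i (C n (1:𝔽)) : Fin n → SkewPoly 𝔽 n) j) (X 𝔽 j - C n (a j))
      = if j = i then X 𝔽 i - C n (a i) else 0 := by
    intro j
    by_cases hj : j = i
    · subst hj; rw [Pi.single_eq_same, S.one_mul, if_pos rfl]
    · rw [Pi.single_eq_of_ne hj, rm_zero_mul, if_neg hj]
  rw [Finset.sum_congr rfl (fun j _ => h1 j),
    Finset.sum_ite_eq' Finset.univ i (fun _ => X 𝔽 i - C n (a i)),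
    if_pos (Finset.mem_univ i), sub_add_cancel]

theorem decomp_single (σ : 𝔽 → Matrix (Fin n) (Fin n) 𝔽) (δ : 𝔽 → Fin n → 𝔽)
    (hS : HasCommRule S σ δ) (m : FreeMonoid (Fin n)) :
    ∃ b, Decomposes S a (Finsupp.single m 1) b := by
  induction m using FreeMonoid.recOn with
  | one => exact ⟨1, decomp_C S 1⟩
  | of_mul x xs ih =>
      obtain ⟨b, hb⟩ := ih
      obtain ⟨G, hG⟩ := hb
      have key : (Finsupp.single (FreeMonoid.of x * xs) (1:𝔽) : SkewPoly 𝔽 n)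
          = S.mul (X 𝔽 x) (Finsupp.single xs 1) := (S.mono_mul_mono (FreeMonoid.of x) xs).symm
      rw [key, hG, S.mul_add, rm_mul_sum]
      have hassoc : ∀ i : Fin n, S.mul (X 𝔽 x) (S.mul (G i) (X 𝔽 i - C n (a i)))
          = S.mul (S.mul (X 𝔽 x) (G i)) (X 𝔽 i - C n (a i)) := fun i => (S.mul_assoc _ _ _).symm
      rw [Finset.sum_congr rfl (fun i _ => hassoc i)]
      -- decompose S.mul (X x) (C n b) via the commutation rule
      have hcomm := hS x b
      have hXC : Decomposes S a (S.mul (X 𝔽 x) (C n b))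
          ((∑ j : Fin n, σ b x j * a j) + δ b x) := by
        rw [hcomm]
        refine decomp_add S ?_ (decomp_C S _)
        refine decomp_sum S _ _ _ (fun j _ => ?_)
        have hsingle : (Finsupp.single (FreeMonoid.of j) (σ b x j) : SkewPoly 𝔽 n)
            = (σ b x j) • X 𝔽 j := by
          rw [X, Finsupp.smul_single' _ _ 1, mul_one]
        rw [hsingle]
        exact decomp_smul S _ (decomp_X S j)
      exact ⟨_, decomp_add S (decomp_ideal S _) hXC⟩

theorem exists_decomp (σ : 𝔽 → Matrix (Fin n) (Fin n) 𝔽) (δ : 𝔽 → Fin n → 𝔽)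
    (hS : HasCommRule S σ δ) (F : SkewPoly 𝔽 n) :
    ∃ b, Decomposes S a F b := by
  classical
  induction F using Finsupp.induction with
  | zero => exact ⟨0, decomp_zero S⟩
  | single_add m c f hmf hc ih =>
      obtain ⟨b, hb⟩ := decomp_single S σ δ hS m
      obtain ⟨b', hb'⟩ := ih
      refine ⟨c * b + b', decomp_add S ?_ hb'⟩
      have : (Finsupp.single m c : SkewPoly 𝔽 n) = c • Finsupp.single m 1 := by
        rw [Finsupp.smul_single' _ _ 1, mul_one]
      rw [this]
      exact decomp_smul S _ hb

theorem decomp_unique {F : SkewPoly 𝔽 n} {b b' : 𝔽}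
    (h : Decomposes S a F b) (h' : Decomposes S a F b') : b = b' := by
  obtain ⟨G, hG⟩ := h
  obtain ⟨G', hG'⟩ := h'
  have hsum : (∑ i : Fin n, S.mul ((G - G') i) (X 𝔽 i - C n (a i))) = C n (b' - b) := by
    have : ∀ i : Fin n, S.mul ((G - G') i) (X 𝔽 i - C n (a i))
        = S.mul (G i) (X 𝔽 i - C n (a i)) - S.mul (G' i) (X 𝔽 i - C n (a i)) := by
      intro i; rw [Pi.sub_apply, rm_sub_mul]
    rw [Finset.sum_congr rfl (fun i _ => this i), Finset.sum_sub_distrib]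
    rw [show (C n (b' - b) : SkewPoly 𝔽 n) = C n b' - C n b from Finsupp.single_sub 1 b' b]
    have h1 : (∑ i : Fin n, S.mul (G i) (X 𝔽 i - C n (a i))) = F - C n b := by
      rw [hG]; abel
    have h2 : (∑ i : Fin n, S.mul (G' i) (X 𝔽 i - C n (a i))) = F - C n b' := by
      rw [hG']; abel
    rw [h1, h2]; abel
  have h0 := sum_ideal_ne_C S hsum
  exact (sub_eq_zero.mp h0).symm

/-! ### Evaluation -/

theorem eval_eq {F : SkewPoly 𝔽 n} {b : 𝔽} (h : Decomposes S a F b) :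
    eval S a F = b := by
  unfold eval
  have hex : ∃ b, Decomposes S a F b := ⟨b, h⟩
  rw [dif_pos hex]
  exact decomp_unique S hex.choose_spec h

variable (σ : 𝔽 → Matrix (Fin n) (Fin n) 𝔽) (δ : 𝔽 → Fin n → 𝔽)

theorem decomp_eval (hS : HasCommRule S σ δ) (F : SkewPoly 𝔽 n) :
    Decomposes S a F (eval S a F) := by
  obtain ⟨b, hb⟩ := exists_decomp S σ δ hS F
  rwa [eval_eq S hb]

theorem eval_C (b : 𝔽) : eval S a (C n b) = b := eval_eq S (decomp_C S b)

theorem eval_sub (hS : HasCommRule S σ δ) (F F' : SkewPoly 𝔽 n) :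
    eval S a (F - F') = eval S a F - eval S a F' :=
  eval_eq S (decomp_sub S (decomp_eval S σ δ hS F) (decomp_eval S σ δ hS F'))

theorem eval_smul (hS : HasCommRule S σ δ) (c : 𝔽) (F : SkewPoly 𝔽 n) :
    eval S a (c • F) = c * eval S a F :=
  eval_eq S (decomp_smul S c (decomp_eval S σ δ hS F))

end Stmt9Aux2
section Stmt9Aux3

open SkewPoly

variable {𝔽 : Type*} [DivisionRing 𝔽] {n : ℕ} (S : RawMul 𝔽 n)
variable (σ : 𝔽 → Matrix (Fin n) (Fin n) 𝔽) (δ : 𝔽 → Fin n → 𝔽)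

theorem subset_pClosure (Ω : Set (Fin n → 𝔽)) : Ω ⊆ pClosure S Ω :=
  fun c hc F hF => hF c hc

theorem pClosure_subset_pClosure {Ω₁ Ω₂ : Set (Fin n → 𝔽)} (h : Ω₁ ⊆ pClosure S Ω₂) :
    pClosure S Ω₁ ⊆ pClosure S Ω₂ := by
  intro x hx F hF
  exact hx F (fun c hc => h hc F hF)

theorem pClosure_mono {Ω₁ Ω₂ : Set (Fin n → 𝔽)} (h : Ω₁ ⊆ Ω₂) :
    pClosure S Ω₁ ⊆ pClosure S Ω₂ :=
  pClosure_subset_pClosure S (h.trans (subset_pClosure S Ω₂))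

/-- The exchange property of the P-closure. -/
theorem pClosure_exchange (hS : HasCommRule S σ δ) {B : Set (Fin n → 𝔽)}
    {a b : Fin n → 𝔽} (hab : a ∈ pClosure S (insert b B)) (hna : a ∉ pClosure S B) :
    b ∈ pClosure S (insert a B) := by
  intro F hF
  -- a witness separating a from B
  simp only [pClosure, Set.mem_setOf_eq] at hna
  push_neg at hna
  obtain ⟨F₀, hF₀, hF₀a⟩ := hna
  set u : 𝔽 := eval S a F₀ with hu
  set F₁ : SkewPoly 𝔽 n := u⁻¹ • F₀ with hF₁
  have hF₁a : eval S a F₁ = 1 := by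
    rw [hF₁, eval_smul S σ δ hS, ← hu, inv_mul_cancel₀ hF₀a]
  have hF₁B : ∀ c ∈ B, eval S c F₁ = 0 := by
    intro c hc
    rw [hF₁, eval_smul S σ δ hS, hF₀ c hc, mul_zero]
  by_contra hb
  set β : 𝔽 := eval S b F with hβ
  set β₀ : 𝔽 := eval S b F₁ with hβ₀
  set H : SkewPoly 𝔽 n := F₁ - (β₀ * β⁻¹) • F with hH
  have hHB : ∀ c ∈ insert b B, eval S c H = 0 := by
    intro c hc
    rcases hc with hc | hc
    · subst hc
      rw [hH, eval_sub S σ δ hS, eval_smul S σ δ hS (β₀ * β⁻¹) F, ← hβ₀, ← hβ, mul_assoc,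
        inv_mul_cancel₀ hb, mul_one, sub_self]
    · rw [hH, eval_sub S σ δ hS, eval_smul S σ δ hS (β₀ * β⁻¹) F, hF₁B c hc,
        hF c (Set.mem_insert_of_mem _ hc), mul_zero, sub_zero]
  have hHa : eval S a H = 0 := hab H hHB
  rw [hH, eval_sub S σ δ hS, eval_smul S σ δ hS (β₀ * β⁻¹) F, hF₁a,
    hF a (Set.mem_insert _ _), mul_zero, sub_zero] at hHa
  exact one_ne_zero hHa

theorem pindep_mono {A A' : Set (Fin n → 𝔽)} (hsub : A ⊆ A') (h : PIndep S A') :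
    PIndep S A := by
  intro a haA hcl
  exact h a (hsub haA) (pClosure_mono S (Set.diff_subset_diff_left hsub) hcl)

theorem pindep_insert (hS : HasCommRule S σ δ) {A : Set (Fin n → 𝔽)} {b : Fin n → 𝔽}
    (hA : PIndep S A) (hb : b ∉ pClosure S A) : PIndep S (insert b A) := by
  have hbA : b ∉ A := fun h => hb (subset_pClosure S A h)
  intro a ha hcl
  by_cases hab : a = b
  · subst hab
    have hset : insert a A \ {a} = A \ {a} := by
      ext x; simp only [Set.mem_diff, Set.mem_insert_iff, Set.mem_singleton_iff]
      constructor
      · rintro ⟨hx | hx, hxa⟩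
        · exact absurd hx hxa
        · exact ⟨hx, hxa⟩
      · rintro ⟨hx, hxa⟩; exact ⟨Or.inr hx, hxa⟩
    rw [hset] at hcl
    exact hb (pClosure_mono S Set.diff_subset hcl)
  · have haA : a ∈ A := by
      rcases ha with h | h
      · exact absurd h hab
      · exact h
    have hset : insert b A \ {a} = insert b (A \ {a}) := by
      ext x; simp only [Set.mem_diff, Set.mem_insert_iff, Set.mem_singleton_iff]
      constructor
      · rintro ⟨hx | hx, hxa⟩
        · exact Or.inl hx
        · exact Or.inr ⟨hx, hxa⟩
      · rintro (hx | ⟨hx, hxa⟩)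
        · exact ⟨Or.inl hx, fun hxa => hab (hxa.symm.trans hx)⟩
        · exact ⟨Or.inr hx, hxa⟩
    rw [hset] at hcl
    have hna : a ∉ pClosure S (A \ {a}) := hA a haA
    have := pClosure_exchange S σ δ hS hcl hna
    have hsub : insert a (A \ {a}) ⊆ A := by
      intro x hx
      rcases hx with hx | hx
      · subst hx; exact haA
      · exact hx.1
    exact hb (pClosure_mono S hsub this)

/-- Pivot extraction: if `b` enters the closure when adding the finite set `T` to `CC`,
some element of `T` can be exchanged for `b`. -/
theorem exists_pivot [DecidableEq (Fin n → 𝔽)] (hS : HasCommRule S σ δ) {b : Fin n → 𝔽} {CC : Set (Fin n → 𝔽)}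
    (T : Finset (Fin n → 𝔽)) (hb : b ∈ pClosure S (CC ∪ ↑T)) (hnb : b ∉ pClosure S CC) :
    ∃ c ∈ T, c ∈ pClosure S (insert b (CC ∪ ↑(T.erase c))) := by
  classical
  induction T using Finset.induction with
  | empty => simp only [Finset.coe_empty, Set.union_empty] at hb; exact absurd hb hnb
  | @insert a₀ T₀ ha₀ ih =>
      by_cases hb0 : b ∈ pClosure S (CC ∪ ↑T₀)
      · obtain ⟨c, hcT, hc⟩ := ih hb0
        refine ⟨c, Finset.mem_insert_of_mem hcT, ?_⟩
        refine pClosure_mono S ?_ hc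
        apply Set.insert_subset_insert
        apply Set.union_subset_union_right
        exact_mod_cast Finset.erase_subset_erase c (Finset.subset_insert a₀ T₀)
      · have hb1 : b ∈ pClosure S (insert a₀ (CC ∪ ↑T₀)) := by
          have : (CC ∪ ↑(insert a₀ T₀) : Set (Fin n → 𝔽)) = insert a₀ (CC ∪ ↑T₀) := by
            rw [Finset.coe_insert, Set.union_insert]
          rwa [this] at hb
        have := pClosure_exchange S σ δ hS hb1 hb0
        refine ⟨a₀, Finset.mem_insert_self _ _, ?_⟩
        refine pClosure_mono S ?_ this
        rw [Finset.erase_insert ha₀]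

/-- Steinitz exchange: an independent finite set inside the closure of `A` can be
completed by part of `A` to span, with the expected cardinality bound. -/
theorem steinitz [DecidableEq (Fin n → 𝔽)] (hS : HasCommRule S σ δ) (A : Finset (Fin n → 𝔽)) :
    ∀ B : Finset (Fin n → 𝔽), PIndep S ↑B → (↑B : Set (Fin n → 𝔽)) ⊆ pClosure S ↑A →
      ∃ A' : Finset (Fin n → 𝔽),
        (↑A : Set (Fin n → 𝔽)) ⊆ pClosure S (↑B ∪ ↑A') ∧ B.card + A'.card ≤ A.card := by
  classical
  intro B
  induction B using Finset.induction with
  | empty =>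
      intro _ _
      refine ⟨A, ?_, by simp⟩
      simp only [Finset.coe_empty, Set.empty_union]
      exact subset_pClosure S ↑A
  | @insert b B₁ hbB₁ ih =>
      intro hind hsub
      have hBsub : (↑B₁ : Set (Fin n → 𝔽)) ⊆ ↑(insert b B₁) := by
        exact_mod_cast Finset.subset_insert b B₁
      have hind₁ : PIndep S ↑B₁ := pindep_mono S hBsub hind
      obtain ⟨A'', hA'', hcard⟩ := ih hind₁ (hBsub.trans hsub)
      have hbclA : b ∈ pClosure S ↑A := hsub (by exact_mod_cast Finset.mem_insert_self b B₁)
      have hbcl : b ∈ pClosure S (↑B₁ ∪ ↑A'') :=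
        pClosure_subset_pClosure S hA'' hbclA
      have hbnot : b ∉ pClosure S ↑B₁ := by
        have h1 := hind b (by exact_mod_cast Finset.mem_insert_self b B₁)
        have hset : (↑(insert b B₁) : Set (Fin n → 𝔽)) \ {b} = ↑B₁ := by
          rw [Finset.coe_insert]
          ext x
          simp only [Set.mem_diff, Set.mem_insert_iff, Set.mem_singleton_iff,
            Finset.mem_coe]
          constructor
          · rintro ⟨hx | hx, hxb⟩
            · exact absurd hx hxb
            · exact hx
          · intro hx
            exact ⟨Or.inr hx, fun hxb => hbB₁ (hxb ▸ hx)⟩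
        rwa [hset] at h1
      obtain ⟨c, hcA'', hc⟩ := exists_pivot S σ δ hS A'' hbcl hbnot
      refine ⟨A''.erase c, ?_, ?_⟩
      · have step : (↑B₁ ∪ ↑A'' : Set (Fin n → 𝔽))
            ⊆ pClosure S (↑(insert b B₁) ∪ ↑(A''.erase c)) := by
          intro x hx
          have hins : insert b (↑B₁ ∪ ↑(A''.erase c) : Set (Fin n → 𝔽))
              = ↑(insert b B₁) ∪ ↑(A''.erase c) := by
            rw [Finset.coe_insert, Set.insert_union]
          rcases hx with hx | hx
          · apply subset_pClosure
            left
            rw [Finset.coe_insert]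
            exact Set.mem_insert_of_mem _ hx
          · by_cases hxc : x = c
            · subst hxc
              rw [← hins]
              exact hc
            · apply subset_pClosure
              right
              rw [Finset.coe_erase]
              exact ⟨hx, hxc⟩
        exact hA''.trans (pClosure_subset_pClosure S step)
      · have h1 : (insert b B₁).card = B₁.card + 1 := Finset.card_insert_of_notMem hbB₁
        have h2 : (A''.erase c).card = A''.card - 1 := Finset.card_erase_of_mem hcA''
        have h3 : 1 ≤ A''.card := Finset.card_pos.2 ⟨c, hcA''⟩
        omega

theorem card_le_of_pindep_subset_pClosure [DecidableEq (Fin n → 𝔽)] (hS : HasCommRule S σ δ)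
    (A B : Finset (Fin n → 𝔽)) (hind : PIndep S ↑B)
    (hsub : (↑B : Set (Fin n → 𝔽)) ⊆ pClosure S ↑A) : B.card ≤ A.card := by
  obtain ⟨A', _, hcard⟩ := steinitz S σ δ hS A B hind hsub
  omega

end Stmt9Aux3


/-- The P-independent subsets of a finitely generated P-closed set `Ω`
form a matroid (empty set independent, closed under subsets, augmentation), and its
bases (maximal independent sets) are exactly the P-bases of `Ω`. -/
theorem stmt9 {𝔽 : Type*} [DivisionRing 𝔽] {n : ℕ} (hn : 0 < n)
    (σ : 𝔽 → Matrix (Fin n) (Fin n) 𝔽) (δ : 𝔽 → Fin n → 𝔽)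
    (hσ : IsMatrixMorphism σ) (hδ : IsVectorDerivation σ δ)
    (S : RawMul 𝔽 n) (hS : HasCommRule S σ δ)
    (Ω : Set (Fin n → 𝔽)) (hΩ : IsPClosed S Ω) (hfg : FinGen S Ω) :
    PIndep S (∅ : Set (Fin n → 𝔽)) ∧
    (∀ A A' : Set (Fin n → 𝔽), A ⊆ A' → A' ⊆ Ω → PIndep S A' → PIndep S A) ∧
    (∀ A A' : Set (Fin n → 𝔽), A ⊆ Ω → A' ⊆ Ω → PIndep S A → PIndep S A' →
      A.ncard < A'.ncard → ∃ b ∈ A' \ A, PIndep S (insert b A)) ∧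
    (∀ B : Set (Fin n → 𝔽), B ⊆ Ω →
      ((PIndep S B ∧
          ∀ B' : Set (Fin n → 𝔽), B ⊆ B' → B' ⊆ Ω → PIndep S B' → B' = B) ↔
        IsPBasis S B Ω)) := by
  classical
  have hΩ' : pClosure S Ω = Ω := hΩ
  obtain ⟨Gset, hGfin, hGsub, hGcl⟩ := hfg
  refine ⟨?_, ?_, ?_, ?_⟩
  · -- the empty set is P-independent
    intro x hx
    exact absurd hx (Set.notMem_empty x)
  · -- subsets of independent sets are independent
    intro A A' hAA' _ hA'
    exact pindep_mono S hAA' hA'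
  · -- augmentation
    intro A A' hAΩ hA'Ω hA hA' hlt
    have hA'fin : A'.Finite := by
      by_contra hinf
      rw [Set.Infinite.ncard hinf] at hlt
      exact Nat.not_lt_zero _ hlt
    have hfin_of_indep : ∀ T : Set (Fin n → 𝔽), T ⊆ Ω → PIndep S T → T.Finite := by
      intro T hTΩ hT
      by_contra hinf
      obtain ⟨T', hT'sub, hT'fin, hT'card⟩ :=
        Set.Infinite.exists_subset_ncard_eq hinf (hGfin.toFinset.card + 1)
      have hind' : PIndep S T' := pindep_mono S hT'sub hT
      have hsub' : (↑hT'fin.toFinset : Set (Fin n → 𝔽)) ⊆ pClosure S ↑hGfin.toFinset := by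
        rw [Set.Finite.coe_toFinset, Set.Finite.coe_toFinset, hGcl]
        exact hT'sub.trans hTΩ
      have hcard := card_le_of_pindep_subset_pClosure S σ δ hS hGfin.toFinset
        hT'fin.toFinset (by rw [Set.Finite.coe_toFinset]; exact hind') hsub'
      have h2 : T'.ncard = hT'fin.toFinset.card := Set.ncard_eq_toFinset_card T' hT'fin
      omega
    have hAfin : A.Finite := hfin_of_indep A hAΩ hA
    by_contra hno
    push_neg at hno
    have hsubcl : A' ⊆ pClosure S A := by
      intro x hx
      by_cases hxA : x ∈ A
      · exact subset_pClosure S A hxA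
      · by_contra hxcl
        exact hno x ⟨hx, hxA⟩ (pindep_insert S σ δ hS hA hxcl)
    have hcard := card_le_of_pindep_subset_pClosure S σ δ hS hAfin.toFinset hA'fin.toFinset
      (by rw [Set.Finite.coe_toFinset]; exact hA')
      (by rw [Set.Finite.coe_toFinset, Set.Finite.coe_toFinset]; exact hsubcl)
    have h1 : A.ncard = hAfin.toFinset.card := Set.ncard_eq_toFinset_card A hAfin
    have h2 : A'.ncard = hA'fin.toFinset.card := Set.ncard_eq_toFinset_card A' hA'fin
    omega
  · -- bases are exactly the maximal independent sets
    intro B hBΩ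
    constructor
    · rintro ⟨hind, hmax⟩
      refine ⟨hBΩ, hind, ?_⟩
      apply Set.Subset.antisymm
      · have := pClosure_mono S hBΩ
        rwa [hΩ'] at this
      · intro x hxΩ
        by_contra hxcl
        have hxB : x ∉ B := fun h => hxcl (subset_pClosure S B h)
        have hins : PIndep S (insert x B) := pindep_insert S σ δ hS hind hxcl
        have heq := hmax (insert x B) (Set.subset_insert x B)
          (Set.insert_subset hxΩ hBΩ) hins
        exact hxB (heq ▸ Set.mem_insert x B)
    · rintro ⟨hBsub, hind, hcl⟩
      refine ⟨hind, ?_⟩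
      intro B' hBB' hB'Ω hB'ind
      apply Set.Subset.antisymm _ hBB'
      intro b hb
      by_contra hbB
      have hsub2 : B ⊆ B' \ {b} := fun x hx => ⟨hBB' hx, fun hxb => hbB (hxb ▸ hx)⟩
      have hbcl : b ∈ pClosure S B := by rw [hcl]; exact hB'Ω hb
      exact hB'ind b hb (pClosure_mono S hsub2 hbcl)
end

section
/- (Lagrange interpolation) Let Ω ⊆ 𝔽ⁿ be a finitely generated P-closed set with finite P-basis B = {b₁,…,b_M}. For every choice of values a₁, a₂, …, a_M ∈ 𝔽 there exists a skew polynomial F ∈ R with deg(F) < M and F(bᵢ) = aᵢ for all i = 1, …, M. -/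
/- Common setup: free multivariate skew polynomial rings over a division ring. -/

open Matrix Finsupp

open SkewPoly

namespace SkewPoly

section Aux

variable {𝔽 : Type*} [DivisionRing 𝔽] {n : ℕ}
variable (σ : 𝔽 → Matrix (Fin n) (Fin n) 𝔽) (δ : 𝔽 → Fin n → 𝔽)

/-- Word evaluation with seed `c`. -/
noncomputable def NC (a : Fin n → 𝔽) (c : 𝔽) (m : FreeMonoid (Fin n)) : 𝔽 :=
  m.toList.foldr (fun i e => (σ e *ᵥ a) i + δ e i) c

lemma NC_one (a : Fin n → 𝔽) (c : 𝔽) : NC σ δ a c 1 = c := rfl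

lemma NC_of_mul (a : Fin n → 𝔽) (c : 𝔽) (i : Fin n) (m : FreeMonoid (Fin n)) :
    NC σ δ a c (FreeMonoid.of i * m) =
      (σ (NC σ δ a c m) *ᵥ a) i + δ (NC σ δ a c m) i := by
  simp only [NC, FreeMonoid.toList_mul, FreeMonoid.toList_of, List.singleton_append,
    List.foldr_cons]

lemma NC_mul_of (a : Fin n → 𝔽) (c : 𝔽) (i : Fin n) (m : FreeMonoid (Fin n)) :
    NC σ δ a c (m * FreeMonoid.of i) = NC σ δ a ((σ c *ᵥ a) i + δ c i) m := by
  simp only [NC, FreeMonoid.toList_mul, FreeMonoid.toList_of, List.foldr_append,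
    List.foldr_cons, List.foldr_nil]

/-- The fundamental evaluation map, as a left-linear map. -/
noncomputable def E (a : Fin n → 𝔽) : SkewPoly 𝔽 n →ₗ[𝔽] 𝔽 :=
  Finsupp.linearCombination 𝔽 (NC σ δ a 1)

lemma E_single (a : Fin n → 𝔽) (m : FreeMonoid (Fin n)) (c : 𝔽) :
    E σ δ a (Finsupp.single m c) = c * NC σ δ a 1 m := by
  rw [E, Finsupp.linearCombination_single, smul_eq_mul]

lemma E_C (a : Fin n → 𝔽) (c : 𝔽) : E σ δ a (C n c) = c := by
  rw [C, E_single, NC_one, mul_one]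

variable {σ δ}

lemma sigma_zero (hσ : IsMatrixMorphism σ) : σ 0 = 0 := by
  have h := hσ.2.1 0 0
  rw [add_zero] at h
  exact (add_eq_left.mp h.symm)

lemma delta_zero (hδ : IsVectorDerivation σ δ) : δ 0 = 0 := by
  have h := hδ.1 0 0
  rw [add_zero] at h
  exact (add_eq_left.mp h.symm)

lemma delta_one (hσ : IsMatrixMorphism σ) (hδ : IsVectorDerivation σ δ) : δ 1 = 0 := by
  have h := hδ.2 1 1
  rw [mul_one, hσ.1, Matrix.one_mulVec] at h
  have h2 : (fun i => δ (1 : 𝔽) i * 1) = δ 1 := by funext i; rw [mul_one]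
  rw [h2] at h
  exact (add_eq_left.mp h.symm)

variable (S : RawMul 𝔽 n)

lemma mul_zero' (F : SkewPoly 𝔽 n) : S.mul F 0 = 0 := by
  have h := S.mul_add F 0 0
  rw [add_zero] at h
  exact (add_eq_left.mp h.symm)

lemma zero_mul' (F : SkewPoly 𝔽 n) : S.mul 0 F = 0 := by
  have h := S.add_mul 0 0 F
  rw [add_zero] at h
  exact (add_eq_left.mp h.symm)

lemma mul_neg' (F G : SkewPoly 𝔽 n) : S.mul F (-G) = -(S.mul F G) := by
  have h := S.mul_add F G (-G)
  rw [add_neg_cancel, mul_zero'] at h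
  exact (eq_neg_of_add_eq_zero_right h.symm)

lemma mul_sub' (F G H : SkewPoly 𝔽 n) : S.mul F (G - H) = S.mul F G - S.mul F H := by
  rw [sub_eq_add_neg, S.mul_add, mul_neg', sub_eq_add_neg]

lemma smul_mul' (c : 𝔽) (F G : SkewPoly 𝔽 n) : S.mul (c • F) G = c • S.mul F G := by
  rw [← S.const_mul c F, S.mul_assoc, S.const_mul]

lemma mul_sum' {ι : Type*} (F : SkewPoly 𝔽 n) (s : Finset ι) (G : ι → SkewPoly 𝔽 n) :
    S.mul F (∑ i ∈ s, G i) = ∑ i ∈ s, S.mul F (G i) := by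
  classical
  induction s using Finset.induction with
  | empty => simp [mul_zero']
  | insert _ _ h ih => rw [Finset.sum_insert h, S.mul_add, ih, Finset.sum_insert h]

lemma sum_mul' {ι : Type*} (s : Finset ι) (G : ι → SkewPoly 𝔽 n) (F : SkewPoly 𝔽 n) :
    S.mul (∑ i ∈ s, G i) F = ∑ i ∈ s, S.mul (G i) F := by
  classical
  induction s using Finset.induction with
  | empty => simp [zero_mul']
  | insert _ _ h ih => rw [Finset.sum_insert h, S.add_mul, ih, Finset.sum_insert h]

lemma single_eq_smul (m : FreeMonoid (Fin n)) (c : 𝔽) :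
    (Finsupp.single m c : SkewPoly 𝔽 n) = c • Finsupp.single m 1 := by
  rw [Finsupp.smul_single', mul_one]

lemma mulX_single (hS : HasCommRule S σ δ) (j : Fin n) (m : FreeMonoid (Fin n)) (c : 𝔽) :
    S.mul (X 𝔽 j) (Finsupp.single m c)
      = (∑ k, Finsupp.single (FreeMonoid.of k * m) (σ c j k)) + Finsupp.single m (δ c j) := by
  have h1 : (Finsupp.single m c : SkewPoly 𝔽 n) = S.mul (C n c) (Finsupp.single m 1) := by
    rw [S.const_mul, single_eq_smul]
  rw [h1, ← S.mul_assoc, hS j c, S.add_mul, sum_mul']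
  congr 1
  · refine Finset.sum_congr rfl fun k _ => ?_
    rw [single_eq_smul, smul_mul', S.mono_mul_mono, Finsupp.smul_single', mul_one]
  · rw [S.const_mul, Finsupp.smul_single', mul_one]

lemma E_mulX (hσ : IsMatrixMorphism σ) (hδ : IsVectorDerivation σ δ)
    (hS : HasCommRule S σ δ) (a : Fin n → 𝔽) (j : Fin n) (H : SkewPoly 𝔽 n) :
    E σ δ a (S.mul (X 𝔽 j) H) = (σ (E σ δ a H) *ᵥ a) j + δ (E σ δ a H) j := by
  have hsingle : ∀ (m : FreeMonoid (Fin n)) (c : 𝔽),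
      E σ δ a (S.mul (X 𝔽 j) (Finsupp.single m c))
        = (σ (E σ δ a (Finsupp.single m c)) *ᵥ a) j + δ (E σ δ a (Finsupp.single m c)) j := by
    intro m c
    rw [mulX_single S hS, map_add, map_sum]
    simp only [E_single, NC_of_mul]
    rw [hσ.2.2 c (NC σ δ a 1 m), ← Matrix.mulVec_mulVec, hδ.2 c (NC σ δ a 1 m)]
    simp only [Matrix.mulVec, dotProduct, Pi.add_apply]
    simp only [mul_add, Finset.sum_add_distrib]
    abel
  induction H using Finsupp.induction with
  | zero =>
    rw [mul_zero', map_zero, sigma_zero hσ, delta_zero hδ, Matrix.zero_mulVec]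
    simp
  | single_add m c f hm hc ih =>
    rw [S.mul_add, map_add, map_add, hsingle, ih, hσ.2.1, hδ.1, Matrix.add_mulVec]
    simp only [Pi.add_apply]
    abel

lemma E_mul_single_C (hσ : IsMatrixMorphism σ) (hδ : IsVectorDerivation σ δ)
    (hS : HasCommRule S σ δ) (a : Fin n → 𝔽) (m : FreeMonoid (Fin n)) (c : 𝔽) :
    E σ δ a (S.mul (Finsupp.single m 1) (C n c)) = NC σ δ a c m := by
  induction m using FreeMonoid.recOn with
  | one =>
    rw [show (Finsupp.single (1 : FreeMonoid (Fin n)) (1 : 𝔽)) = C n 1 from rfl,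
      S.one_mul, E_C, NC_one]
  | of_mul x xs ihx =>
    rw [show (Finsupp.single (FreeMonoid.of x * xs) (1:𝔽))
        = S.mul (X 𝔽 x) (Finsupp.single xs 1) from (S.mono_mul_mono _ _).symm,
      S.mul_assoc, E_mulX S hσ hδ hS, ihx, NC_of_mul]

lemma E_mul_gen (hσ : IsMatrixMorphism σ) (hδ : IsVectorDerivation σ δ)
    (hS : HasCommRule S σ δ) (a : Fin n → 𝔽) (G : SkewPoly 𝔽 n) (i : Fin n) :
    E σ δ a (S.mul G (X 𝔽 i - C n (a i))) = 0 := by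
  induction G using Finsupp.induction with
  | zero => rw [zero_mul', map_zero]
  | single_add m c f hm hc ih =>
    rw [S.add_mul, map_add, ih, add_zero, single_eq_smul, smul_mul', _root_.map_smul, smul_eq_mul]
    have hkey : E σ δ a (S.mul (Finsupp.single m 1) (X 𝔽 i - C n (a i))) = 0 := by
      rw [mul_sub', map_sub,
        show X 𝔽 i = Finsupp.single (FreeMonoid.of i) (1:𝔽) from rfl,
        S.mono_mul_mono, E_single, one_mul, NC_mul_of, hσ.1, Matrix.one_mulVec,
        delta_one hσ hδ, E_mul_single_C S hσ hδ hS]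
      simp
    rw [hkey, mul_zero]

/-- Membership in the left ideal generated by the `xᵢ - aᵢ`. -/
def InI (a : Fin n → 𝔽) (F : SkewPoly 𝔽 n) : Prop :=
  ∃ G : Fin n → SkewPoly 𝔽 n, F = ∑ i, S.mul (G i) (X 𝔽 i - C n (a i))

variable {S}

lemma InI_zero (a : Fin n → 𝔽) : InI S a 0 :=
  ⟨0, by simp [zero_mul']⟩

lemma InI_add {a : Fin n → 𝔽} {F F' : SkewPoly 𝔽 n} (h : InI S a F) (h' : InI S a F') :
    InI S a (F + F') := by
  obtain ⟨G, hG⟩ := h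
  obtain ⟨G', hG'⟩ := h'
  exact ⟨G + G', by
    rw [hG, hG', ← Finset.sum_add_distrib]
    exact Finset.sum_congr rfl fun i _ => (S.add_mul _ _ _).symm⟩

lemma InI_smul {a : Fin n → 𝔽} (c : 𝔽) {F : SkewPoly 𝔽 n} (h : InI S a F) :
    InI S a (c • F) := by
  obtain ⟨G, hG⟩ := h
  exact ⟨fun i => c • G i, by
    rw [hG, Finset.smul_sum]
    exact Finset.sum_congr rfl fun i _ => (smul_mul' S c _ _).symm⟩

lemma InI_mul_left {a : Fin n → 𝔽} (H : SkewPoly 𝔽 n) {F : SkewPoly 𝔽 n} (h : InI S a F) :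
    InI S a (S.mul H F) := by
  obtain ⟨G, hG⟩ := h
  exact ⟨fun i => S.mul H (G i), by
    rw [hG, mul_sum']
    exact Finset.sum_congr rfl fun i _ => (S.mul_assoc _ _ _).symm⟩

lemma InI_gen (a : Fin n → 𝔽) (j : Fin n) : InI S a (X 𝔽 j - C n (a j)) := by
  classical
  refine ⟨fun i => if i = j then C n 1 else 0, ?_⟩
  have h : ∀ i : Fin n, S.mul (if i = j then C n 1 else 0) (X 𝔽 i - C n (a i))
      = if i = j then (X 𝔽 i - C n (a i)) else 0 := by
    intro i; split
    · rw [S.one_mul]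
    · rw [zero_mul']
  rw [Finset.sum_congr rfl fun i _ => h i, Finset.sum_ite_eq' Finset.univ j
    (fun i => X 𝔽 i - C n (a i))]
  simp

lemma InI_sum {ι : Type*} {a : Fin n → 𝔽} (s : Finset ι) (f : ι → SkewPoly 𝔽 n)
    (h : ∀ i ∈ s, InI S a (f i)) : InI S a (∑ i ∈ s, f i) := by
  classical
  induction s using Finset.induction with
  | empty => simpa using InI_zero a
  | insert _ _ hns ih =>
    rw [Finset.sum_insert hns]
    exact InI_add (h _ (Finset.mem_insert_self _ _))
      (ih fun i hi => h i (Finset.mem_insert_of_mem hi))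

lemma C_add (x y : 𝔽) : C n (x + y) = C n x + C n y := by
  rw [C, C, C, Finsupp.single_add]

lemma InI_single (hσ : IsMatrixMorphism σ) (hδ : IsVectorDerivation σ δ)
    (hS : HasCommRule S σ δ) (a : Fin n → 𝔽) (m : FreeMonoid (Fin n)) :
    InI S a (Finsupp.single m 1 - C n (NC σ δ a 1 m)) := by
  induction m using FreeMonoid.recOn with
  | one =>
    rw [NC_one, show (Finsupp.single (1 : FreeMonoid (Fin n)) (1:𝔽)) = C n 1 from rfl, sub_self]
    exact InI_zero a
  | of_mul j m ih =>
    set N := NC σ δ a 1 m with hN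
    have key : Finsupp.single (FreeMonoid.of j * m) (1:𝔽)
        = S.mul (X 𝔽 j) (Finsupp.single m 1 - C n N)
          + ((∑ k, (σ N j k) • (X 𝔽 k - C n (a k)))
            + C n ((σ N *ᵥ a) j + δ N j)) := by
      have h1 : Finsupp.single (FreeMonoid.of j * m) (1:𝔽)
          = S.mul (X 𝔽 j) (Finsupp.single m 1) := (S.mono_mul_mono _ _).symm
      have h2 : S.mul (X 𝔽 j) (Finsupp.single m 1)
          = S.mul (X 𝔽 j) (Finsupp.single m 1 - C n N) + S.mul (X 𝔽 j) (C n N) := by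
        rw [← S.mul_add, sub_add_cancel]
      have h3 : S.mul (X 𝔽 j) (C n N)
          = (∑ k, (σ N j k) • (X 𝔽 k - C n (a k))) + C n ((σ N *ᵥ a) j + δ N j) := by
        rw [hS j N]
        have h4 : ∀ k : Fin n, Finsupp.single (FreeMonoid.of k) (σ N j k)
            = (σ N j k) • (X 𝔽 k - C n (a k)) + C n (σ N j k * a k) := by
          intro k
          rw [smul_sub, X, Finsupp.smul_single', mul_one, C, C, Finsupp.smul_single',
            sub_add_cancel]
        rw [Finset.sum_congr rfl fun k _ => h4 k, Finset.sum_add_distrib]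
        have h5 : (∑ k, C n (σ N j k * a k)) = C n ((σ N *ᵥ a) j) := by
          simp only [C]
          rw [← Finsupp.single_finset_sum]
          simp [Matrix.mulVec, dotProduct]
        rw [h5, C_add]
        abel
      rw [h1, h2, h3]
    rw [NC_of_mul, ← hN]
    have heq : Finsupp.single (FreeMonoid.of j * m) (1:𝔽) - C n ((σ N *ᵥ a) j + δ N j)
        = S.mul (X 𝔽 j) (Finsupp.single m 1 - C n N)
          + ∑ k, (σ N j k) • (X 𝔽 k - C n (a k)) := by
      rw [key]; abel
    rw [heq]
    exact InI_add (InI_mul_left _ ih)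
      (InI_sum _ _ fun k _ => InI_smul _ (InI_gen a k))

lemma InI_sub_E (hσ : IsMatrixMorphism σ) (hδ : IsVectorDerivation σ δ)
    (hS : HasCommRule S σ δ) (a : Fin n → 𝔽) (F : SkewPoly 𝔽 n) :
    InI S a (F - C n (E σ δ a F)) := by
  induction F using Finsupp.induction with
  | zero =>
    rw [map_zero, show C n (0:𝔽) = 0 from Finsupp.single_zero 1, sub_zero]
    exact InI_zero a
  | single_add m c f hm hc ih =>
    have h1 : (Finsupp.single m c + f) - C n (E σ δ a (Finsupp.single m c + f))
        = (Finsupp.single m c - C n (E σ δ a (Finsupp.single m c)))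
          + (f - C n (E σ δ a f)) := by
      rw [map_add, C_add]; abel
    rw [h1]
    refine InI_add ?_ ih
    rw [E_single, single_eq_smul, show C n (c * NC σ δ a 1 m) = c • C n (NC σ δ a 1 m) from
      by rw [C, C, Finsupp.smul_single'], ← smul_sub]
    exact InI_smul _ (InI_single hσ hδ hS a m)

lemma eval_eq_E (hσ : IsMatrixMorphism σ) (hδ : IsVectorDerivation σ δ)
    (hS : HasCommRule S σ δ) (a : Fin n → 𝔽) (F : SkewPoly 𝔽 n) :
    eval S a F = E σ δ a F := by
  have huniq : ∀ bv : 𝔽, Decomposes S a F bv → bv = E σ δ a F := by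
    intro bv ⟨G, hG⟩
    rw [hG, map_add, map_sum, E_C,
      Finset.sum_eq_zero fun i _ => E_mul_gen S hσ hδ hS a (G i) i, zero_add]
  have hex : ∃ bv : 𝔽, Decomposes S a F bv := by
    obtain ⟨G, hG⟩ := InI_sub_E hσ hδ hS a F
    exact ⟨E σ δ a F, G, by rw [← hG]; abel⟩
  rw [eval, dif_pos hex]
  exact huniq _ hex.choose_spec

lemma mem_supported_add_split {s : Set (FreeMonoid (Fin n))} {m : FreeMonoid (Fin n)}
    {c : 𝔽} {f : SkewPoly 𝔽 n} (hm : m ∉ f.support) (hc : c ≠ 0)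
    (h : Finsupp.single m c + f ∈ Finsupp.supported 𝔽 𝔽 s) :
    m ∈ s ∧ f ∈ Finsupp.supported 𝔽 𝔽 s := by
  classical
  rw [Finsupp.mem_supported, Finsupp.support_add_eq, Finset.coe_union,
    Set.union_subset_iff] at h
  · refine ⟨?_, (Finsupp.mem_supported _ _).2 h.2⟩
    have h1 := h.1
    rw [Finsupp.support_single_ne_zero _ hc] at h1
    exact h1 (by simp)
  · rw [Finsupp.support_single_ne_zero _ hc]
    simpa [Finset.disjoint_singleton_left] using hm

lemma mulX_supported (hS : HasCommRule S σ δ) (j : Fin n) (d : ℕ) (F : SkewPoly 𝔽 n)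
    (hF : F ∈ Finsupp.supported 𝔽 𝔽 {m : FreeMonoid (Fin n) | m.length < d}) :
    S.mul (X 𝔽 j) F ∈ Finsupp.supported 𝔽 𝔽 {m : FreeMonoid (Fin n) | m.length < d + 1} := by
  classical
  revert hF
  induction F using Finsupp.induction with
  | zero => intro _; rw [mul_zero']; exact zero_mem _
  | single_add m c f hm hc ih =>
    intro hF
    obtain ⟨hms, hfs⟩ := mem_supported_add_split hm hc hF
    rw [S.mul_add]
    refine add_mem ?_ (ih hfs)
    rw [mulX_single S hS]
    refine add_mem (sum_mem fun k _ => ?_) ?_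
    · refine Finsupp.single_mem_supported 𝔽 _ ?_
      simp only [Set.mem_setOf_eq, FreeMonoid.length_mul, FreeMonoid.length_of]
      simp only [Set.mem_setOf_eq] at hms
      omega
    · refine Finsupp.single_mem_supported 𝔽 _ ?_
      simp only [Set.mem_setOf_eq] at hms ⊢
      omega

end Aux

end SkewPoly
/-- Lagrange interpolation: given a finite P-basis `b₁, …, b_M` of a
finitely generated P-closed set `Ω` and values `a₁, …, a_M`, there is `F` with
`deg F < M` and `F(bᵢ) = aᵢ` for all `i`. -/
theorem stmt12 {𝔽 : Type*} [DivisionRing 𝔽] {n : ℕ} (hn : 0 < n)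
    (σ : 𝔽 → Matrix (Fin n) (Fin n) 𝔽) (δ : 𝔽 → Fin n → 𝔽)
    (hσ : IsMatrixMorphism σ) (hδ : IsVectorDerivation σ δ)
    (S : RawMul 𝔽 n) (hS : HasCommRule S σ δ)
    (Ω : Set (Fin n → 𝔽)) (hΩ : IsPClosed S Ω) (hfg : FinGen S Ω)
    (M : ℕ) (b : Fin M → (Fin n → 𝔽)) (hbinj : Function.Injective b)
    (hB : IsPBasis S (Set.range b) Ω) (v : Fin M → 𝔽) :
    ∃ F : SkewPoly 𝔽 n, deg F < (M : WithBot ℕ) ∧ ∀ i : Fin M, eval S (b i) F = v i := by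
  classical
  set evB : SkewPoly 𝔽 n →ₗ[𝔽] (Fin M → 𝔽) :=
    LinearMap.pi (fun i => E σ δ (b i)) with hevB
  set W : ℕ → Submodule 𝔽 (Fin M → 𝔽) := fun d =>
    Submodule.map evB (Finsupp.supported 𝔽 𝔽 {m : FreeMonoid (Fin n) | m.length < d}) with hWdef
  have Wmono : Monotone W := by
    intro d e hde
    exact Submodule.map_mono (Finsupp.supported_mono fun m hm => lt_of_lt_of_le hm hde)
  have Wstep : ∀ d : ℕ, W (d + 1) ≤ W d → W (d + 2) ≤ W (d + 1) := by
    intro d hle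
    rintro y ⟨F, hF, rfl⟩
    revert hF
    induction F using Finsupp.induction with
    | zero => intro _; rw [map_zero]; exact zero_mem _
    | single_add m c f hm hc ih =>
      intro hF
      obtain ⟨hms, hfs⟩ := mem_supported_add_split hm hc hF
      rw [map_add]
      refine add_mem ?_ (ih hfs)
      rw [single_eq_smul, _root_.map_smul]
      refine Submodule.smul_mem _ _ ?_
      by_cases hlt : m.length < d + 1
      · exact ⟨Finsupp.single m 1, Finsupp.single_mem_supported 𝔽 _ hlt, rfl⟩
      · simp only [Set.mem_setOf_eq] at hms
        have hlen : m.length = d + 1 := by omega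
        have hm_ne : m.toList ≠ [] := by
          intro h
          have : m.length = 0 := by
            show m.toList.length = 0
            rw [h]; rfl
          omega
        obtain ⟨j, l, hl⟩ := List.exists_cons_of_ne_nil hm_ne
        set m' : FreeMonoid (Fin n) := FreeMonoid.ofList l with hm'def
        have hm' : m = FreeMonoid.of j * m' := by
          rw [← FreeMonoid.ofList_toList m, hl]; rfl
        have hm'len : m'.length = d := by
          have : m.length = l.length + 1 := by
            show m.toList.length = l.length + 1
            rw [hl]; rfl
          have h2 : m'.length = l.length := rfl
          omega
        have h1 : evB (Finsupp.single m' (1:𝔽)) ∈ W d := by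
          refine hle ⟨Finsupp.single m' 1, Finsupp.single_mem_supported 𝔽 _ ?_, rfl⟩
          simp only [Set.mem_setOf_eq]; omega
        obtain ⟨F', hF', hEq⟩ := h1
        have hE0 : ∀ i, E σ δ (b i) (Finsupp.single m' (1:𝔽) - F') = 0 := by
          intro i
          rw [map_sub, sub_eq_zero]
          have := congrFun hEq i
          simpa [evB, LinearMap.pi_apply] using this.symm
        have hzero : evB (S.mul (X 𝔽 j) (Finsupp.single m' (1:𝔽) - F')) = 0 := by
          funext i
          simp only [evB, LinearMap.pi_apply]
          rw [E_mulX S hσ hδ hS, hE0 i, sigma_zero hσ, delta_zero hδ, Matrix.zero_mulVec]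
          simp
        have hsplit : Finsupp.single m (1:𝔽)
            = S.mul (X 𝔽 j) F' + S.mul (X 𝔽 j) (Finsupp.single m' 1 - F') := by
          rw [← S.mul_add, add_sub_cancel, hm', ← S.mono_mul_mono]
          rfl
        rw [hsplit, map_add, hzero, add_zero]
        exact ⟨S.mul (X 𝔽 j) F', mulX_supported hS j d F' hF', rfl⟩
  have Wstab : ∀ d, W (d + 1) ≤ W d → ∀ e, W e ≤ W d := by
    intro d hle e
    rcases le_or_gt e d with h | h
    · exact Wmono h
    · have key : ∀ k, W (d + k + 1) ≤ W (d + k) := by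
        intro k
        induction k with
        | zero => simpa using hle
        | succ k ihk => exact Wstep (d + k) ihk
      have key2 : ∀ k, W (d + k) ≤ W d := by
        intro k
        induction k with
        | zero => simp
        | succ k ihk => exact le_trans (key k) ihk
      have he : e = d + (e - d) := by omega
      rw [he]; exact key2 _
  have htop : ∃ D, W D = ⊤ := by
    have hind := hB.2.1
    have hone : ∀ i : Fin M, ∃ D, Pi.single i (1:𝔽) ∈ W D := by
      intro i
      have hbi : b i ∈ Set.range b := ⟨i, rfl⟩
      have hni := hind (b i) hbi
      rw [pClosure, Set.mem_setOf_eq] at hni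
      push_neg at hni
      obtain ⟨F, hFzero, hFne⟩ := hni
      set c := eval S (b i) F with hc
      have hform : evB (c⁻¹ • F) = Pi.single i 1 := by
        funext k
        simp only [evB, LinearMap.pi_apply, _root_.map_smul, smul_eq_mul]
        rw [← eval_eq_E hσ hδ hS]
        by_cases hk : k = i
        · subst hk
          rw [Pi.single_eq_same, ← hc]
          exact inv_mul_cancel₀ hFne
        · have hmem : b k ∈ Set.range b \ {b i} := by
            refine ⟨⟨k, rfl⟩, ?_⟩
            simp only [Set.mem_singleton_iff]
            exact fun h => hk (hbinj h)
          rw [hFzero (b k) hmem, mul_zero, Pi.single_eq_of_ne hk]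
      refine ⟨(F.support.sup fun m => m.length) + 1, c⁻¹ • F, ?_, hform⟩
      refine Submodule.smul_mem _ _ ?_
      rw [Finsupp.mem_supported]
      intro m hm
      exact Nat.lt_succ_of_le (Finset.le_sup hm)
    choose D hD using hone
    refine ⟨Finset.univ.sup D, ?_⟩
    rw [eq_top_iff, ← (Pi.basisFun 𝔽 (Fin M)).span_eq, Submodule.span_le]
    rintro x ⟨i, rfl⟩
    rw [Pi.basisFun_apply]
    exact Wmono (Finset.le_sup (Finset.mem_univ i)) (hD i)
  have hWM : W M = ⊤ := by
    by_cases hcase : ∃ d, d < M ∧ W (d + 1) ≤ W d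
    · obtain ⟨d, hdM, hle⟩ := hcase
      obtain ⟨D, hDtop⟩ := htop
      have h1 : W D ≤ W d := Wstab d hle D
      have h2 : W d ≤ W M := Wmono (le_of_lt hdM)
      rw [eq_top_iff]
      exact le_trans (le_trans (le_of_eq hDtop.symm) h1) h2
    · push_neg at hcase
      have hstrict : ∀ d < M, W d < W (d + 1) := by
        intro d hd
        exact lt_of_le_of_ne (Wmono (Nat.le_succ d))
          fun h => hcase d hd (le_of_eq h.symm)
      have hrank : ∀ d ≤ M, d ≤ Module.finrank 𝔽 (W d) := by
        intro d
        induction d with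
        | zero => intro _; exact Nat.zero_le _
        | succ d ihd =>
          intro hd
          have h1 := ihd (Nat.le_of_succ_le hd)
          have h2 := Submodule.finrank_lt_finrank_of_lt (hstrict d (by omega))
          omega
      have h1 := hrank M le_rfl
      have h2 : Module.finrank 𝔽 (Fin M → 𝔽) = M := by
        rw [Module.finrank_pi]; exact Fintype.card_fin M
      have h3 := Submodule.finrank_le (W M)
      exact Submodule.eq_top_of_finrank_eq (by omega)
  have hv : v ∈ W M := by rw [hWM]; trivial
  obtain ⟨F, hFsupp, hFeval⟩ := hv
  refine ⟨F, ?_, ?_⟩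
  · rw [deg]
    refine (Finset.sup_lt_iff (α := WithBot ℕ) (WithBot.bot_lt_coe M)).2 fun m hm => ?_
    have hlt : m.length < M := (Finsupp.mem_supported 𝔽 F).1 hFsupp hm
    exact Nat.cast_lt.2 hlt
  · intro i
    rw [eval_eq_E hσ hδ hS]
    have := congrFun hFeval i
    simpa [evB, LinearMap.pi_apply] using this
end
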